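/- Let N ≥ 5 and J ≥ 1 be integers. Then there exists a constant C = C(N, J) such that for all real numbers y₁, …, y_J and h: | ((N−2)/(2N)) |Σ_{j=1}^{J} y_j + h|^{2N/(N−2)} − ((N−2)/(2N)) Σ_{j=1}^{J} |y_j|^{2N/(N−2)} − Σ_{j=1}^{J} |y_j|^{4/(N−2)} y_j h − Σ_{1 ≤ j ≠ k ≤ J} |y_j|^{4/(N−2)} y_j y_k | ≤ C ( Σ_{1 ≤ j < k ≤ J} ( min{ |y_j|^{4/(N−2)} y_k², |y_k|^{4/(N−2)} y_j² } + min{ |y_j|^{(N+2)/(N−2)} |y_k|, |y_k|^{(N+2)/(N−2)} |y_j| } ) + |h|^{2N/(N−2)} + Σ_{j=1}^{J} |y_j|^{4/(N−2)} h² ). -/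

import Mathlib

open Real Finset

private lemma sq_eq_rpow (x : ℝ) : x ^ 2 = |x| ^ (2:ℝ) := by
  rw [show ((2:ℝ)) = ((2:ℕ):ℝ) by norm_num, Real.rpow_natCast, sq_abs]

private lemma rpow_add'' {x : ℝ} (hx : 0 ≤ x) {a b : ℝ} (ha : 0 < a) (hb : 0 < b) :
    x ^ (a + b) = x ^ a * x ^ b := by
  rcases hx.eq_or_lt with h | h
  · rw [← h, Real.zero_rpow (by positivity : a + b ≠ 0),
      Real.zero_rpow ha.ne', Real.zero_rpow hb.ne', mul_zero]
  · exact Real.rpow_add h a b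

private lemma sum_rpow_bound {ι : Type*} (s : Finset ι) (a : ι → ℝ) (q : ℝ) (hq : 0 < q)
    (ha : ∀ i ∈ s, 0 ≤ a i) :
    (∑ i ∈ s, a i) ^ q ≤ (s.card : ℝ) ^ q * ∑ i ∈ s, a i ^ q := by
  rcases s.eq_empty_or_nonempty with rfl | hs
  · simp [Real.zero_rpow hq.ne']
  · obtain ⟨i₀, hi₀, hmax⟩ := s.exists_max_image a hs
    have h1 : (∑ i ∈ s, a i) ≤ (s.card : ℝ) * a i₀ := by
      have := Finset.sum_le_card_nsmul s a (a i₀) hmax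
      simpa [nsmul_eq_mul] using this
    have h0 : 0 ≤ a i₀ := ha i₀ hi₀
    have h2 : (∑ i ∈ s, a i) ^ q ≤ ((s.card : ℝ) * a i₀) ^ q :=
      Real.rpow_le_rpow (Finset.sum_nonneg ha) h1 hq.le
    have h3 : ((s.card : ℝ) * a i₀) ^ q = (s.card : ℝ) ^ q * a i₀ ^ q :=
      Real.mul_rpow (by positivity) h0
    have h4 : a i₀ ^ q ≤ ∑ i ∈ s, a i ^ q :=
      Finset.single_le_sum (fun i hi => Real.rpow_nonneg (ha i hi) q) hi₀
    calc (∑ i ∈ s, a i) ^ q ≤ (s.card : ℝ) ^ q * a i₀ ^ q := by rw [← h3]; exact h2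
    _ ≤ (s.card : ℝ) ^ q * ∑ i ∈ s, a i ^ q := by
        apply mul_le_mul_of_nonneg_left h4 (by positivity)

private lemma minA_aux {q : ℝ} (hq0 : 0 < q) (hq2 : q < 2) (u v : ℝ)
    (huv : |u| ≤ |v|) : |v| ^ q * u ^ 2 ≤ |u| ^ q * v ^ 2 := by
  rcases eq_or_ne u 0 with rfl | hu
  · simp [Real.zero_rpow hq0.ne']
  · have hu0 : (0:ℝ) < |u| := abs_pos.2 hu
    have hv0 : (0:ℝ) < |v| := lt_of_lt_of_le hu0 huv
    rw [sq_eq_rpow u, sq_eq_rpow v,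
      show (2:ℝ) = q + (2 - q) by ring,
      Real.rpow_add hu0, Real.rpow_add hv0]
    have h1 : |u| ^ (2 - q) ≤ |v| ^ (2 - q) :=
      Real.rpow_le_rpow (abs_nonneg u) huv (by linarith)
    have h2 : (0:ℝ) ≤ |v| ^ q * |u| ^ q := by positivity
    calc |v| ^ q * (|u| ^ q * |u| ^ (2 - q)) = |v| ^ q * |u| ^ q * |u| ^ (2 - q) := by ring
    _ ≤ |v| ^ q * |u| ^ q * |v| ^ (2 - q) := mul_le_mul_of_nonneg_left h1 h2
    _ = |u| ^ q * (|v| ^ q * |v| ^ (2 - q)) := by ring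

private lemma minB_aux {q : ℝ} (hq : 0 < q) {u v : ℝ} (hu : 0 ≤ u) (huv : u ≤ v) :
    u ^ (q + 1) * v ≤ v ^ (q + 1) * u := by
  have hv : 0 ≤ v := hu.trans huv
  rw [rpow_add'' hu hq one_pos, rpow_add'' hv hq one_pos, Real.rpow_one, Real.rpow_one]
  have h1 : u ^ q ≤ v ^ q := Real.rpow_le_rpow hu huv hq.le
  nlinarith [mul_nonneg hu hv]

private lemma pair_sum_bound {n : ℕ} (G : Fin n → Fin n → ℝ)
    (hsymm : ∀ j k, G j k = G k j) (hpos : ∀ j k, 0 ≤ G j k) (m : Fin n) :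
    ∑ j ∈ Finset.univ.erase m, G j m ≤ ∑ j, ∑ k, if j < k then G j k else 0 := by
  have hsplit : ∑ j ∈ Finset.univ.erase m, G j m
      = (∑ j ∈ Finset.univ.erase m, if j < m then G j m else 0)
        + ∑ j ∈ Finset.univ.erase m, if m < j then G m j else 0 := by
    rw [← Finset.sum_add_distrib]
    apply Finset.sum_congr rfl
    intro j hj
    have hne : j ≠ m := Finset.mem_erase.1 hj |>.1
    rcases lt_or_gt_of_ne hne with h | h
    · simp [h, asymm h, hsymm]
    · simp [h, asymm h, not_lt_of_gt h, hsymm j m]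
  rw [hsplit, ← Finset.add_sum_erase _ _ (Finset.mem_univ m)]
  have h1 : ∑ j ∈ Finset.univ.erase m, (if j < m then G j m else 0)
      ≤ ∑ j ∈ Finset.univ.erase m, ∑ k, if j < k then G j k else 0 := by
    apply Finset.sum_le_sum
    intro j _
    have := Finset.single_le_sum (f := fun k => if j < k then G j k else 0)
      (fun k _ => by by_cases hc : j < k <;> simp [hc, hpos]) (Finset.mem_univ m)
    simpa using this
  have h2 : ∑ j ∈ Finset.univ.erase m, (if m < j then G m j else 0)
      ≤ ∑ k, if m < k then G m k else 0 := by
    apply Finset.sum_le_sum_of_subset_of_nonneg (Finset.erase_subset _ _)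
    intro k _ _
    by_cases hc : m < k <;> simp [hc, hpos]
  linarith

private lemma abs_rpow_eq_sq (x : ℝ) (q : ℝ) : |x| ^ q = (x ^ 2) ^ (q / 2) := by
  rw [sq_eq_rpow x, ← Real.rpow_mul (abs_nonneg x),
    show (2:ℝ) * (q/2) = q by ring]

private lemma lemA {p : ℝ} (hp : 2 < p) (hp4 : p < 4) (a b : ℝ) :
    |1 / p * |a + b| ^ p - 1 / p * |a| ^ p - |a| ^ (p - 2) * a * b|
      ≤ 100 * (|a| ^ (p - 2) * b ^ 2 + |b| ^ p) := by
  have hx1 : (0:ℝ) ≤ |a| ^ (p - 2) * b ^ 2 := by positivity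
  have hx2 : (0:ℝ) ≤ |b| ^ p := by positivity
  have hinvp : 1 / p ≤ 1 / 2 := by
    rw [div_le_div_iff₀ (by linarith) (by norm_num)]; linarith
  have hinvp0 : (0:ℝ) < 1 / p := by positivity
  by_cases hab : |a| ≤ 2 * |b|
  · -- small a case
    have h1 : |a + b| ^ p ≤ (3 * |b|) ^ p := by
      apply Real.rpow_le_rpow (abs_nonneg _) _ (by linarith)
      have := abs_add_le a b; linarith
    have h2 : (3 * |b|) ^ p = (3:ℝ) ^ p * |b| ^ p := Real.mul_rpow (by norm_num) (abs_nonneg b)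
    have h3 : (3:ℝ) ^ p ≤ 81 := by
      have := Real.rpow_le_rpow_of_exponent_le (by norm_num : (1:ℝ) ≤ 3) hp4.le
      rw [show ((4:ℝ)) = ((4:ℕ):ℝ) by norm_num, Real.rpow_natCast] at this
      norm_num at this; linarith
    have h4 : |a| ^ p ≤ (2 * |b|) ^ p :=
      Real.rpow_le_rpow (abs_nonneg _) hab (by linarith)
    have h5 : (2 * |b|) ^ p = (2:ℝ) ^ p * |b| ^ p := Real.mul_rpow (by norm_num) (abs_nonneg b)
    have h6 : (2:ℝ) ^ p ≤ 16 := by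
      have := Real.rpow_le_rpow_of_exponent_le (by norm_num : (1:ℝ) ≤ 2) hp4.le
      rw [show ((4:ℝ)) = ((4:ℕ):ℝ) by norm_num, Real.rpow_natCast] at this
      norm_num at this; linarith
    have h7 : |(|a| ^ (p - 2) * a * b)| ≤ 2 * (|a| ^ (p - 2) * b ^ 2) := by
      rw [abs_mul, abs_mul, abs_of_nonneg (Real.rpow_nonneg (abs_nonneg a) _)]
      have hb2 : b ^ 2 = |b| * |b| := by rw [pow_two, ← abs_mul_abs_self b]
      rw [hb2]
      have hx := Real.rpow_nonneg (abs_nonneg a) (p - 2)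
      calc |a| ^ (p - 2) * |a| * |b| ≤ |a| ^ (p - 2) * (2 * |b|) * |b| := by
            apply mul_le_mul_of_nonneg_right _ (abs_nonneg b)
            exact mul_le_mul_of_nonneg_left hab hx
      _ = 2 * (|a| ^ (p - 2) * (|b| * |b|)) := by ring
    have habp : |a + b| ^ p ≥ 0 := by positivity
    have hap : |a| ^ p ≥ 0 := by positivity
    have key1 : 1 / p * |a + b| ^ p ≤ 41 * |b| ^ p := by
      have : 1 / p * |a + b| ^ p ≤ 1 / 2 * (81 * |b| ^ p) := by
        apply mul_le_mul hinvp _ habp (by norm_num)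
        calc |a + b| ^ p ≤ (3 * |b|) ^ p := h1
        _ = (3:ℝ) ^ p * |b| ^ p := h2
        _ ≤ 81 * |b| ^ p := mul_le_mul_of_nonneg_right h3 hx2
      linarith
    have key2 : 1 / p * |a| ^ p ≤ 8 * |b| ^ p := by
      have : 1 / p * |a| ^ p ≤ 1 / 2 * (16 * |b| ^ p) := by
        apply mul_le_mul hinvp _ hap (by norm_num)
        calc |a| ^ p ≤ (2 * |b|) ^ p := h4
        _ = (2:ℝ) ^ p * |b| ^ p := h5
        _ ≤ 16 * |b| ^ p := mul_le_mul_of_nonneg_right h6 hx2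
      linarith
    calc |1 / p * |a + b| ^ p - 1 / p * |a| ^ p - |a| ^ (p - 2) * a * b|
        ≤ |1 / p * |a + b| ^ p| + |1 / p * |a| ^ p| + |(|a| ^ (p - 2) * a * b)| := by
          have := abs_sub (1 / p * |a + b| ^ p - 1 / p * |a| ^ p) (|a| ^ (p - 2) * a * b)
          have := abs_sub (1 / p * |a + b| ^ p) (1 / p * |a| ^ p)
          calc |1 / p * |a + b| ^ p - 1 / p * |a| ^ p - |a| ^ (p - 2) * a * b|
              ≤ |1 / p * |a + b| ^ p - 1 / p * |a| ^ p| + |(|a| ^ (p - 2) * a * b)| :=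
                abs_sub _ _
          _ ≤ |1 / p * |a + b| ^ p| + |1 / p * |a| ^ p| + |(|a| ^ (p - 2) * a * b)| := by
                have := abs_sub (1 / p * |a + b| ^ p) (1 / p * |a| ^ p)
                linarith
    _ ≤ 41 * |b| ^ p + 8 * |b| ^ p + 2 * (|a| ^ (p - 2) * b ^ 2) := by
        rw [abs_of_nonneg (mul_nonneg hinvp0.le habp), abs_of_nonneg (mul_nonneg hinvp0.le hap)]
        linarith
    _ ≤ 100 * (|a| ^ (p - 2) * b ^ 2 + |b| ^ p) := by linarith
  · -- large a case: Taylor via MVT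
    push_neg at hab
    have ha0 : (0:ℝ) < |a| := lt_of_le_of_lt (by positivity) hab
    set s : Set ℝ := Set.uIcc a (a + b) with hs
    have hsconv : Convex ℝ s := convex_uIcc a (a + b)
    have hma : a ∈ s := Set.left_mem_uIcc
    have hmt : a + b ∈ s := Set.right_mem_uIcc
    have hdist : ∀ x ∈ s, |x - a| ≤ |b| := by
      intro x hx
      rcases le_total a (a + b) with hle | hle
      · rw [hs, Set.uIcc_of_le hle] at hx
        obtain ⟨hx1', hx2'⟩ := hx
        rw [abs_of_nonneg (by linarith), abs_of_nonneg (by linarith : (0:ℝ) ≤ b)]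
        linarith
      · rw [hs, Set.uIcc_of_ge hle] at hx
        obtain ⟨hx1', hx2'⟩ := hx
        rw [abs_of_nonpos (by linarith), abs_of_nonpos (by linarith : b ≤ (0:ℝ))]
        linarith
    have hlow : ∀ x ∈ s, x ≠ 0 := by
      intro x hx h0
      have := hdist x hx
      rw [h0, zero_sub, abs_neg] at this
      linarith
    have hupp : ∀ x ∈ s, |x| ≤ 3 / 2 * |a| := by
      intro x hx
      have h1 := hdist x hx
      have h2 : |x| - |a| ≤ |x - a| := abs_sub_abs_le_abs_sub x a
      linarith
    set f : ℝ → ℝ := fun x => (x ^ 2) ^ ((p - 2) / 2) * x with hf_def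
    have hf : ∀ x : ℝ, x ≠ 0 → HasDerivAt f ((p - 1) * (x ^ 2) ^ ((p - 2) / 2)) x := by
      intro x hx
      have h1 : HasDerivAt (fun x : ℝ => x ^ 2) (2 * x) x := by
        simpa [mul_comm] using hasDerivAt_pow 2 x
      have h2 := h1.rpow_const (p := (p - 2) / 2) (Or.inl (pow_ne_zero 2 hx))
      have h3 := h2.mul (hasDerivAt_id x)
      convert h3 using 1
      · rfl
      · rfl
      · rfl
      have hx2 : (x:ℝ) ^ 2 ≠ 0 := pow_ne_zero 2 hx
      rw [Real.rpow_sub_one hx2]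
      field_simp
      simp only [id]
      ring
    set g : ℝ → ℝ := fun x => 1 / p * (x ^ 2) ^ (p / 2) with hg_def
    have hg : ∀ x : ℝ, HasDerivAt g (f x) x := by
      intro x
      have h1 : HasDerivAt (fun x : ℝ => x ^ 2) (2 * x) x := by
        simpa [mul_comm] using hasDerivAt_pow 2 x
      have h2 := h1.rpow_const (p := p / 2) (Or.inr (by linarith))
      have h3 := h2.const_mul (1 / p)
      convert h3 using 1
      · rfl
      · rfl
      rw [hf_def]
      simp only
      rw [show p / 2 - 1 = (p - 2) / 2 by ring]
      field_simp
    set K : ℝ := (p - 1) * (3 / 2 * |a|) ^ (p - 2) with hK_def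
    have hK0 : 0 ≤ K := by
      apply mul_nonneg (by linarith)
      exact Real.rpow_nonneg (by positivity) _
    have stepA : ∀ x ∈ s, |f x - f a| ≤ K * |b| := by
      intro x hx
      have bound : ∀ u ∈ s, ‖(p - 1) * (u ^ 2) ^ ((p - 2) / 2)‖ ≤ K := by
        intro u hu
        rw [Real.norm_eq_abs, abs_of_nonneg (mul_nonneg (by linarith)
          (Real.rpow_nonneg (by positivity) _))]
        rw [← abs_rpow_eq_sq u (p - 2)]
        apply mul_le_mul_of_nonneg_left _ (by linarith)
        exact Real.rpow_le_rpow (abs_nonneg u) (hupp u hu) (by linarith)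
      have := hsconv.norm_image_sub_le_of_norm_hasDerivWithin_le
        (f' := fun u => (p - 1) * (u ^ 2) ^ ((p - 2) / 2))
        (fun u hu => (hf u (hlow u hu)).hasDerivWithinAt) bound hma hx
      rw [Real.norm_eq_abs, Real.norm_eq_abs] at this
      calc |f x - f a| ≤ K * |x - a| := this
      _ ≤ K * |b| := mul_le_mul_of_nonneg_left (hdist x hx) hK0
    set ψ : ℝ → ℝ := fun x => g x - f a * x with hψ_def
    have stepB : |ψ (a + b) - ψ a| ≤ K * |b| * |b| := by
      have hψd : ∀ x ∈ s, HasDerivWithinAt ψ (f x - f a) s x := by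
        intro x _
        have h1 : HasDerivAt (fun x : ℝ => f a * x) (f a) x := by
          simpa using (hasDerivAt_id x).const_mul (f a)
        exact ((hg x).sub h1).hasDerivWithinAt
      have bound : ∀ x ∈ s, ‖f x - f a‖ ≤ K * |b| := by
        intro x hx
        rw [Real.norm_eq_abs]
        exact stepA x hx
      have := hsconv.norm_image_sub_le_of_norm_hasDerivWithin_le hψd bound hma hmt
      rw [Real.norm_eq_abs, Real.norm_eq_abs] at this
      simpa using this
    have hgx : ∀ x : ℝ, g x = 1 / p * |x| ^ p := by
      intro x
      rw [hg_def]
      simp only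
      rw [abs_rpow_eq_sq x p]
    have hfa : f a = |a| ^ (p - 2) * a := by
      rw [hf_def]
      simp only
      rw [abs_rpow_eq_sq a (p - 2)]
    have heq : ψ (a + b) - ψ a
        = 1 / p * |a + b| ^ p - 1 / p * |a| ^ p - |a| ^ (p - 2) * a * b := by
      rw [hψ_def]
      simp only
      rw [hgx, hgx, hfa]
      ring
    rw [← heq]
    have hKb : K * |b| * |b| = K * b ^ 2 := by rw [pow_two, ← abs_mul_abs_self b]; ring
    have hKle : K ≤ 27 / 4 * |a| ^ (p - 2) := by
      rw [hK_def]
      have h1 : (3 / 2 * |a|) ^ (p - 2) = (3 / 2 : ℝ) ^ (p - 2) * |a| ^ (p - 2) :=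
        Real.mul_rpow (by norm_num) (abs_nonneg a)
      have h2 : (3 / 2 : ℝ) ^ (p - 2) ≤ 9 / 4 := by
        have := Real.rpow_le_rpow_of_exponent_le (by norm_num : (1:ℝ) ≤ 3 / 2)
          (by linarith : p - 2 ≤ (2:ℝ))
        rw [show ((2:ℝ)) = ((2:ℕ):ℝ) by norm_num, Real.rpow_natCast] at this
        norm_num at this; linarith
      have h3 : (0:ℝ) ≤ |a| ^ (p - 2) := by positivity
      calc (p - 1) * (3 / 2 * |a|) ^ (p - 2)
          = (p - 1) * ((3 / 2 : ℝ) ^ (p - 2) * |a| ^ (p - 2)) := by rw [h1]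
      _ ≤ 3 * (9 / 4 * |a| ^ (p - 2)) := by
          apply mul_le_mul (by linarith) _ (by positivity) (by norm_num)
          exact mul_le_mul_of_nonneg_right h2 h3
      _ = 27 / 4 * |a| ^ (p - 2) := by ring
    have hb2 : (0:ℝ) ≤ b ^ 2 := sq_nonneg b
    calc |ψ (a + b) - ψ a| ≤ K * |b| * |b| := stepB
    _ = K * b ^ 2 := hKb
    _ ≤ 27 / 4 * |a| ^ (p - 2) * b ^ 2 := mul_le_mul_of_nonneg_right hKle hb2
    _ ≤ 100 * (|a| ^ (p - 2) * b ^ 2 + |b| ^ p) := by nlinarith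
private lemma young_sq (u v : ℝ) : |u| * |v| ≤ (u ^ 2 + v ^ 2) / 2 := by
  nlinarith [sq_nonneg (|u| - |v|), sq_abs u, sq_abs v]

set_option maxHeartbeats 2000000 in
/-- Pointwise multi-bump expansion inequality for the energy-critical potential
term. -/
theorem multibump_potential_expansion
    (N : ℕ) (hN : 5 ≤ N) (J : ℕ) (hJ : 1 ≤ J) :
    ∃ C : ℝ, 0 < C ∧ ∀ (y : Fin J → ℝ) (h : ℝ),
      |((N : ℝ) - 2) / (2 * (N : ℝ)) * |(∑ j, y j) + h| ^ (2 * (N : ℝ) / ((N : ℝ) - 2))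
          - ((N : ℝ) - 2) / (2 * (N : ℝ)) * ∑ j, |y j| ^ (2 * (N : ℝ) / ((N : ℝ) - 2))
          - ∑ j, |y j| ^ ((4 : ℝ) / ((N : ℝ) - 2)) * y j * h
          - ∑ j, ∑ k, (if j ≠ k then |y j| ^ ((4 : ℝ) / ((N : ℝ) - 2)) * y j * y k else 0)|
        ≤ C * ((∑ j, ∑ k, if j < k then
                min (|y j| ^ ((4 : ℝ) / ((N : ℝ) - 2)) * (y k) ^ 2)
                    (|y k| ^ ((4 : ℝ) / ((N : ℝ) - 2)) * (y j) ^ 2)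
                + min (|y j| ^ (((N : ℝ) + 2) / ((N : ℝ) - 2)) * |y k|)
                    (|y k| ^ (((N : ℝ) + 2) / ((N : ℝ) - 2)) * |y j|)
              else 0)
            + |h| ^ (2 * (N : ℝ) / ((N : ℝ) - 2))
            + ∑ j, |y j| ^ ((4 : ℝ) / ((N : ℝ) - 2)) * h ^ 2) := by
  have hN5 : (5:ℝ) ≤ (N:ℝ) := by exact_mod_cast hN
  set p : ℝ := 2 * (N:ℝ) / ((N:ℝ) - 2) with hp_def
  clear_value p
  have hp2 : 2 < p := by
    rw [hp_def, lt_div_iff₀ (by linarith)]; linarith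
  have hp103 : p ≤ 10/3 := by
    rw [hp_def, div_le_iff₀ (by linarith)]; linarith
  have hp4 : p < 4 := by linarith
  have hq0 : (0:ℝ) < p - 2 := by linarith
  have hq2 : p - 2 < 2 := by linarith
  have hNne : (N:ℝ) - 2 ≠ 0 := by linarith
  have he1 : (4:ℝ)/((N:ℝ)-2) = p - 2 := by
    rw [hp_def]; field_simp; ring
  have he3 : ((N:ℝ)+2)/((N:ℝ)-2) = p - 1 := by
    rw [hp_def]; field_simp; ring
  have he4 : ((N:ℝ)-2)/(2*(N:ℝ)) = 1/p := by
    rw [hp_def, one_div_div]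
  have hJ1 : (1:ℝ) ≤ (J:ℝ) := by exact_mod_cast hJ
  set K : ℝ := ((J:ℝ))^4 with hK_def
  clear_value K
  have hK1 : (1:ℝ) ≤ K := by
    rw [hK_def]
    calc (1:ℝ) = 1^4 := by norm_num
    _ ≤ ((J:ℝ))^4 := pow_le_pow_left₀ (by norm_num) hJ1 4
  have hJK : (J:ℝ) ≤ K := by
    rw [hK_def]
    exact le_self_pow₀ hJ1 (by norm_num)
  refine ⟨300*K + 2, by linarith, ?_⟩
  intro y h
  rw [he1, he3, he4]
  obtain ⟨m, -, hm⟩ := Finset.exists_max_image Finset.univ (fun j => |y j|)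
    ⟨⟨0, hJ⟩, Finset.mem_univ _⟩
  simp only [Finset.mem_univ, forall_true_left] at hm
  set S : ℝ := ∑ j, y j with hS
  set t : ℝ := S + h with ht
  clear_value S t
  -- notation
  set G : Fin J → Fin J → ℝ := fun j k =>
      min (|y j| ^ (p-2) * (y k) ^ 2) (|y k| ^ (p-2) * (y j) ^ 2)
      + min (|y j| ^ (p-1) * |y k|) (|y k| ^ (p-1) * |y j|) with hG_def
  have hGsymm : ∀ j k, G j k = G k j := by
    intro j k
    simp only [hG_def]
    rw [min_comm, min_comm (|y j| ^ (p-1) * |y k|) _]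
  clear_value G
  have hGpos : ∀ j k, 0 ≤ G j k := by
    intro j k
    simp only [hG_def]
    have h1 : (0:ℝ) ≤ |y j| ^ (p-2) * (y k) ^ 2 := by positivity
    have h2 : (0:ℝ) ≤ |y j| ^ (p-1) * |y k| := by positivity
    have h3 : (0:ℝ) ≤ |y k| ^ (p-2) * (y j) ^ 2 := by positivity
    have h4 : (0:ℝ) ≤ |y k| ^ (p-1) * |y j| := by positivity
    have := le_min h1 h3
    have := le_min h2 h4
    positivity
  have hTG : (∑ j, ∑ k, if j < k then
                min (|y j| ^ (p-2) * (y k) ^ 2) (|y k| ^ (p-2) * (y j) ^ 2)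
                + min (|y j| ^ (p-1) * |y k|) (|y k| ^ (p-1) * |y j|)
              else 0)
      = ∑ j, ∑ k, if j < k then G j k else 0 := by
    simp only [hG_def]
  rw [hTG]
  set P : ℝ := ∑ j ∈ Finset.univ.erase m, G j m with hP_def
  set T : ℝ := ∑ j, ∑ k, if j < k then G j k else 0 with hT_def
  set R1 : ℝ := ∑ j, |y j| ^ (p-2) * h ^ 2 with hR1_def
  clear_value P T R1
  have hPT : P ≤ T := by
    rw [hP_def, hT_def]; exact pair_sum_bound G hGsymm hGpos m
  have hP0 : 0 ≤ P := by
    rw [hP_def]; exact Finset.sum_nonneg fun j _ => hGpos j m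
  have hT0 : 0 ≤ T := hP0.trans hPT
  have hR10 : 0 ≤ R1 := by
    rw [hR1_def]; exact Finset.sum_nonneg fun j _ => by positivity
  have hR20 : (0:ℝ) ≤ |h| ^ p := by positivity
  -- per-index min facts
  have hyp_p : ∀ j : Fin J, |y j| ^ p = |y j| ^ (p-2) * (y j) ^ 2 := by
    intro j
    have h1 : |y j| ^ ((p-2) + 2) = |y j| ^ (p-2) * |y j| ^ (2:ℝ) :=
      rpow_add'' (abs_nonneg _) hq0 (by norm_num)
    rw [show (p-2) + 2 = p by ring] at h1
    rw [h1, ← sq_eq_rpow]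
  have hyp_p1 : ∀ j : Fin J, |y j| ^ (p-1) = |y j| ^ (p-2) * |y j| := by
    intro j
    have h1 : |y j| ^ ((p-2) + 1) = |y j| ^ (p-2) * |y j| ^ (1:ℝ) :=
      rpow_add'' (abs_nonneg _) hq0 one_pos
    rw [show (p-2) + 1 = p - 1 by ring] at h1
    rw [h1, Real.rpow_one]
  have hminB : ∀ j : Fin J, |y j| ^ (p-1) * |y m|
      ≤ min (|y j| ^ (p-1) * |y m|) (|y m| ^ (p-1) * |y j|) := by
    intro j
    refine le_min le_rfl ?_
    have h1 := minB_aux hq0 (abs_nonneg (y j)) (hm j)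
    rw [show (p-2) + 1 = p - 1 by ring] at h1
    exact h1
  have hGB : ∀ j : Fin J, |y j| ^ (p-1) * |y m| ≤ G j m := by
    intro j
    refine (hminB j).trans ?_
    simp only [hG_def]
    have h1 : (0:ℝ) ≤ |y j| ^ (p-2) * (y m) ^ 2 := by positivity
    have h3 : (0:ℝ) ≤ |y m| ^ (p-2) * (y j) ^ 2 := by positivity
    have := le_min h1 h3
    linarith
  have hGB0 : ∀ j : Fin J, |y j| ^ p ≤ G j m := by
    intro j
    refine le_trans ?_ (hGB j)
    calc |y j| ^ p = |y j| ^ (p-1) * |y j| := by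
          have h1 : |y j| ^ ((p-1) + 1) = |y j| ^ (p-1) * |y j| ^ (1:ℝ) :=
            rpow_add'' (abs_nonneg _) (by linarith) one_pos
          rw [show (p-1) + 1 = p by ring] at h1
          rw [h1, Real.rpow_one]
    _ ≤ |y j| ^ (p-1) * |y m| :=
        mul_le_mul_of_nonneg_left (hm j) (Real.rpow_nonneg (abs_nonneg _) _)
  have hGA : ∀ j : Fin J, |y m| ^ (p-2) * (y j) ^ 2 ≤ G j m := by
    intro j
    have h1 : |y m| ^ (p-2) * (y j) ^ 2
        ≤ min (|y j| ^ (p-2) * (y m) ^ 2) (|y m| ^ (p-2) * (y j) ^ 2) :=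
      le_min (minA_aux hq0 hq2 (y j) (y m) (hm j)) le_rfl
    refine h1.trans ?_
    simp only [hG_def]
    have h2 : (0:ℝ) ≤ |y j| ^ (p-1) * |y m| := by positivity
    have h4 : (0:ℝ) ≤ |y m| ^ (p-1) * |y j| := by positivity
    have := le_min h2 h4
    linarith
  -- main algebraic identity
  have hinner : ∀ j : Fin J, (∑ k, if j ≠ k then |y j| ^ (p-2) * y j * y k else 0)
      = |y j| ^ (p-2) * y j * (S - y j) := by
    intro j
    have hterm : ∀ k : Fin J, (if j ≠ k then |y j| ^ (p-2) * y j * y k else 0)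
        = |y j| ^ (p-2) * y j * y k - (if j = k then |y j| ^ (p-2) * y j * y k else 0) := by
      intro k; by_cases hjk : j = k <;> simp [hjk]
    rw [Finset.sum_congr rfl (fun k _ => hterm k), Finset.sum_sub_distrib,
      Finset.sum_ite_eq Finset.univ j (fun k => |y j| ^ (p-2) * y j * y k)]
    simp only [Finset.mem_univ, if_true]
    rw [← Finset.mul_sum, ← hS]
    ring
  have hsplit : ∀ f : Fin J → ℝ, ∑ j, f j = f m + ∑ j ∈ Finset.univ.erase m, f j :=
    fun f => (Finset.add_sum_erase _ f (Finset.mem_univ m)).symm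
  have hmain_eq : 1/p * |t| ^ p - 1/p * (∑ j, |y j| ^ p)
      - (∑ j, |y j| ^ (p-2) * y j * h)
      - (∑ j, ∑ k, if j ≠ k then |y j| ^ (p-2) * y j * y k else 0)
      = (1/p * |t| ^ p - 1/p * |y m| ^ p - |y m| ^ (p-2) * y m * (t - y m))
        - ∑ j ∈ Finset.univ.erase m,
            (1/p * |y j| ^ p + |y j| ^ (p-2) * y j * (t - y j)) := by
    rw [Finset.sum_congr rfl (fun j _ => hinner j)]
    rw [hsplit (fun j => |y j| ^ p), hsplit (fun j => |y j| ^ (p-2) * y j * h),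
      hsplit (fun j => |y j| ^ (p-2) * y j * (S - y j))]
    have hR : ∑ j ∈ Finset.univ.erase m,
        (1/p * |y j| ^ p + |y j| ^ (p-2) * y j * (t - y j))
        = (1/p) * (∑ j ∈ Finset.univ.erase m, |y j| ^ p)
          + ((∑ j ∈ Finset.univ.erase m, |y j| ^ (p-2) * y j * h)
            + ∑ j ∈ Finset.univ.erase m, |y j| ^ (p-2) * y j * (S - y j)) := by
      rw [Finset.mul_sum, ← Finset.sum_add_distrib, ← Finset.sum_add_distrib]
      apply Finset.sum_congr rfl
      intro j _
      rw [ht]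
      ring
    rw [hR, ht]
    ring
  rw [hmain_eq]
  -- bound the m-th (Taylor) term
  set b : ℝ := t - y m with hb_def
  clear_value b
  have hDm : |1/p * |t| ^ p - 1/p * |y m| ^ p - |y m| ^ (p-2) * y m * b|
      ≤ 100 * (|y m| ^ (p-2) * b ^ 2 + |b| ^ p) := by
    have := lemA hp2 hp4 (y m) b
    rw [show y m + b = t by rw [hb_def]; ring] at this
    exact this
  -- bound b
  set w : Fin J → ℝ := fun j => if j = m then |h| else |y j| with hw_def
  clear_value w
  have hw_nonneg : ∀ j ∈ Finset.univ, (0:ℝ) ≤ w j := by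
    intro j _
    simp only [hw_def]
    split <;> positivity
  have hb_sum : b = h + ∑ j ∈ Finset.univ.erase m, y j := by
    rw [hb_def, ht, hS, ← Finset.add_sum_erase _ y (Finset.mem_univ m)]
    ring
  have hw_m : w m = |h| := by simp [hw_def]
  have hw_ne : ∀ j ∈ Finset.univ.erase m, w j = |y j| := by
    intro j hj
    have := (Finset.mem_erase.1 hj).1
    simp [hw_def, this]
  have hb_le : |b| ≤ ∑ j, w j := by
    rw [hb_sum, hsplit w, hw_m, Finset.sum_congr rfl hw_ne]
    have h1 := abs_add_le h (∑ j ∈ Finset.univ.erase m, y j)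
    have h2 := Finset.abs_sum_le_sum_abs y (Finset.univ.erase m)
    linarith
  have hwsum_nonneg : (0:ℝ) ≤ ∑ j, w j := Finset.sum_nonneg hw_nonneg
  have hcard : ((Finset.univ : Finset (Fin J)).card : ℝ) = (J:ℝ) := by
    rw [Finset.card_univ, Fintype.card_fin]
  have hJp_le : ∀ q : ℝ, 0 < q → q ≤ 4 → ((J:ℝ)) ^ q ≤ K := by
    intro q hq hq4
    have h1 : (J:ℝ) ^ q ≤ (J:ℝ) ^ (4:ℝ) :=
      Real.rpow_le_rpow_of_exponent_le hJ1 hq4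
    have h2 : (J:ℝ) ^ (4:ℝ) = K := by
      rw [hK_def, show ((4:ℝ)) = ((4:ℕ):ℝ) by norm_num, Real.rpow_natCast]
    exact h1.trans_eq h2
  -- b^2 bound
  have hb2 : b ^ 2 ≤ K * (h ^ 2 + ∑ j ∈ Finset.univ.erase m, (y j) ^ 2) := by
    have h1 : |b| ^ (2:ℝ) ≤ (∑ j, w j) ^ (2:ℝ) :=
      Real.rpow_le_rpow (abs_nonneg b) hb_le (by norm_num)
    have h2 := sum_rpow_bound Finset.univ w 2 (by norm_num) hw_nonneg
    have h3 : ∑ j, (w j) ^ (2:ℝ) = h ^ 2 + ∑ j ∈ Finset.univ.erase m, (y j) ^ 2 := by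
      have hrest : ∑ j ∈ Finset.univ.erase m, (w j) ^ (2:ℝ)
          = ∑ j ∈ Finset.univ.erase m, (y j) ^ 2 :=
        Finset.sum_congr rfl fun j hj => by rw [hw_ne j hj, ← sq_eq_rpow]
      rw [hsplit (fun j => (w j) ^ (2:ℝ)), hw_m, ← sq_eq_rpow, hrest]
    have h4 : |b| ^ (2:ℝ) = b ^ 2 := (sq_eq_rpow b).symm
    have h5 : ((Finset.univ : Finset (Fin J)).card : ℝ) ^ (2:ℝ) ≤ K := by
      rw [hcard]; exact hJp_le 2 (by norm_num) (by norm_num)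
    have h6 : (0:ℝ) ≤ ∑ j, (w j) ^ (2:ℝ) :=
      Finset.sum_nonneg fun j hj => Real.rpow_nonneg (hw_nonneg j hj) _
    calc b ^ 2 = |b| ^ (2:ℝ) := h4.symm
    _ ≤ ((Finset.univ : Finset (Fin J)).card : ℝ) ^ (2:ℝ) * ∑ j, (w j) ^ (2:ℝ) :=
        h1.trans h2
    _ ≤ K * ∑ j, (w j) ^ (2:ℝ) := mul_le_mul_of_nonneg_right h5 h6
    _ = K * (h ^ 2 + ∑ j ∈ Finset.univ.erase m, (y j) ^ 2) := by rw [h3]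
  -- |b|^p bound
  have hbp : |b| ^ p ≤ K * (|h| ^ p + ∑ j ∈ Finset.univ.erase m, |y j| ^ p) := by
    have h1 : |b| ^ p ≤ (∑ j, w j) ^ p :=
      Real.rpow_le_rpow (abs_nonneg b) hb_le (by linarith)
    have h2 := sum_rpow_bound Finset.univ w p (by linarith) hw_nonneg
    have h3 : ∑ j, (w j) ^ p = |h| ^ p + ∑ j ∈ Finset.univ.erase m, |y j| ^ p := by
      have hrest : ∑ j ∈ Finset.univ.erase m, (w j) ^ p
          = ∑ j ∈ Finset.univ.erase m, |y j| ^ p :=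
        Finset.sum_congr rfl fun j hj => by rw [hw_ne j hj]
      rw [hsplit (fun j => (w j) ^ p), hw_m, hrest]
    have h5 : ((Finset.univ : Finset (Fin J)).card : ℝ) ^ p ≤ K := by
      rw [hcard]; exact hJp_le p (by linarith) (by linarith)
    have h6 : (0:ℝ) ≤ ∑ j, (w j) ^ p :=
      Finset.sum_nonneg fun j hj => Real.rpow_nonneg (hw_nonneg j hj) _
    calc |b| ^ p ≤ ((Finset.univ : Finset (Fin J)).card : ℝ) ^ p * ∑ j, (w j) ^ p :=
        h1.trans h2
    _ ≤ K * ∑ j, (w j) ^ p := mul_le_mul_of_nonneg_right h5 h6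
    _ = K * (|h| ^ p + ∑ j ∈ Finset.univ.erase m, |y j| ^ p) := by rw [h3]
  -- assemble Dm bound in terms of R1, P, |h|^p
  have hym : (0:ℝ) ≤ |y m| ^ (p-2) := Real.rpow_nonneg (abs_nonneg _) _
  have hDm2 : |1/p * |t| ^ p - 1/p * |y m| ^ p - |y m| ^ (p-2) * y m * b|
      ≤ 100 * K * (R1 + P) + 100 * K * (|h| ^ p + P) := by
    have ha : |y m| ^ (p-2) * b ^ 2 ≤ K * (R1 + P) := by
      have h1 : |y m| ^ (p-2) * b ^ 2
          ≤ |y m| ^ (p-2) * (K * (h ^ 2 + ∑ j ∈ Finset.univ.erase m, (y j) ^ 2)) :=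
        mul_le_mul_of_nonneg_left hb2 hym
      have h2 : |y m| ^ (p-2) * h ^ 2 ≤ R1 := by
        rw [hR1_def]
        exact Finset.single_le_sum (f := fun j => |y j| ^ (p-2) * h ^ 2)
          (fun j _ => by positivity) (Finset.mem_univ m)
      have h3 : ∑ j ∈ Finset.univ.erase m, |y m| ^ (p-2) * (y j) ^ 2 ≤ P := by
        rw [hP_def]
        exact Finset.sum_le_sum fun j _ => hGA j
      calc |y m| ^ (p-2) * b ^ 2
          ≤ |y m| ^ (p-2) * (K * (h ^ 2 + ∑ j ∈ Finset.univ.erase m, (y j) ^ 2)) := h1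
      _ = K * (|y m| ^ (p-2) * h ^ 2 + ∑ j ∈ Finset.univ.erase m, |y m| ^ (p-2) * (y j) ^ 2) := by
          rw [← Finset.mul_sum]; ring
      _ ≤ K * (R1 + P) := by
          apply mul_le_mul_of_nonneg_left _ (by linarith)
          linarith
    have hbb : |b| ^ p ≤ K * (|h| ^ p + P) := by
      have h3 : ∑ j ∈ Finset.univ.erase m, |y j| ^ p ≤ P := by
        rw [hP_def]
        exact Finset.sum_le_sum fun j _ => hGB0 j
      calc |b| ^ p ≤ K * (|h| ^ p + ∑ j ∈ Finset.univ.erase m, |y j| ^ p) := hbp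
      _ ≤ K * (|h| ^ p + P) := by
          apply mul_le_mul_of_nonneg_left _ (by linarith)
          linarith
    calc |1/p * |t| ^ p - 1/p * |y m| ^ p - |y m| ^ (p-2) * y m * b|
        ≤ 100 * (|y m| ^ (p-2) * b ^ 2 + |b| ^ p) := hDm
    _ ≤ 100 * (K * (R1 + P) + K * (|h| ^ p + P)) := by linarith
    _ = 100 * K * (R1 + P) + 100 * K * (|h| ^ p + P) := by ring
  -- per-j bounds for j ≠ m
  have hAj : ∀ j ∈ Finset.univ.erase m,
      |1/p * |y j| ^ p + |y j| ^ (p-2) * y j * (t - y j)|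
        ≤ ((J:ℝ) + 2) * G j m + (1/2) * (|y j| ^ (p-2) * h ^ 2) := by
    intro j hj
    have hyj : (0:ℝ) ≤ |y j| ^ (p-2) := Real.rpow_nonneg (abs_nonneg _) _
    have hyj1 : (0:ℝ) ≤ |y j| ^ (p-1) := Real.rpow_nonneg (abs_nonneg _) _
    -- |t - y j| bound
    have htyj : |t - y j| ≤ |h| + (J:ℝ) * |y m| := by
      have h1 : t - y j = h + ∑ k ∈ Finset.univ.erase j, y k := by
        rw [ht, hS, ← Finset.add_sum_erase _ y (Finset.mem_univ j)]
        ring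
      have h2 := abs_add_le h (∑ k ∈ Finset.univ.erase j, y k)
      have h3 := Finset.abs_sum_le_sum_abs y (Finset.univ.erase j)
      have h4 : ∑ k ∈ Finset.univ.erase j, |y k| ≤ ∑ k, |y k| :=
        Finset.sum_le_sum_of_subset_of_nonneg (Finset.erase_subset _ _)
          (fun k _ _ => abs_nonneg _)
      have h5 : ∑ k, |y k| ≤ (J:ℝ) * |y m| := by
        have := Finset.sum_le_card_nsmul Finset.univ (fun k => |y k|) (|y m|)
          (fun k _ => hm k)
        rw [nsmul_eq_mul, Finset.card_univ, Fintype.card_fin] at this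
        exact this
      rw [h1]
      calc |h + ∑ k ∈ Finset.univ.erase j, y k|
          ≤ |h| + |∑ k ∈ Finset.univ.erase j, y k| := h2
      _ ≤ |h| + (J:ℝ) * |y m| := by linarith
    -- Young
    have hyoung : |y j| ^ (p-1) * |h| ≤ (1/2) * (|y j| ^ p + |y j| ^ (p-2) * h ^ 2) := by
      have hsc : |y j| * |h| ≤ ((y j) ^ 2 + h ^ 2) / 2 := young_sq (y j) h
      calc |y j| ^ (p-1) * |h| = |y j| ^ (p-2) * (|y j| * |h|) := by
            rw [hyp_p1 j]; ring
      _ ≤ |y j| ^ (p-2) * (((y j) ^ 2 + h ^ 2) / 2) :=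
          mul_le_mul_of_nonneg_left hsc hyj
      _ = (1/2) * (|y j| ^ (p-2) * (y j) ^ 2 + |y j| ^ (p-2) * h ^ 2) := by ring
      _ = (1/2) * (|y j| ^ p + |y j| ^ (p-2) * h ^ 2) := by rw [← hyp_p j]
    -- abs split
    have habs : |1/p * |y j| ^ p + |y j| ^ (p-2) * y j * (t - y j)|
        ≤ 1/p * |y j| ^ p + |y j| ^ (p-1) * |t - y j| := by
      have h1 := abs_add_le (1/p * |y j| ^ p) (|y j| ^ (p-2) * y j * (t - y j))
      have h2 : |1/p * |y j| ^ p| = 1/p * |y j| ^ p := by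
        apply abs_of_nonneg
        apply mul_nonneg _ (Real.rpow_nonneg (abs_nonneg _) _)
        positivity
      have h3 : |(|y j| ^ (p-2) * y j * (t - y j))| = |y j| ^ (p-1) * |t - y j| := by
        rw [abs_mul, abs_mul, abs_of_nonneg hyj, hyp_p1 j]
      rw [h2, h3] at h1
      exact h1
    have hinvp1 : 1/p ≤ 1 := by
      rw [div_le_one (by linarith)]; linarith
    have hyp_le : 1/p * |y j| ^ p ≤ G j m := by
      calc 1/p * |y j| ^ p ≤ 1 * |y j| ^ p := by
            apply mul_le_mul_of_nonneg_right hinvp1 (Real.rpow_nonneg (abs_nonneg _) _)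
      _ = |y j| ^ p := by ring
      _ ≤ G j m := hGB0 j
    have hprod : |y j| ^ (p-1) * |t - y j|
        ≤ |y j| ^ (p-1) * |h| + (J:ℝ) * (|y j| ^ (p-1) * |y m|) := by
      calc |y j| ^ (p-1) * |t - y j| ≤ |y j| ^ (p-1) * (|h| + (J:ℝ) * |y m|) :=
          mul_le_mul_of_nonneg_left htyj hyj1
      _ = |y j| ^ (p-1) * |h| + (J:ℝ) * (|y j| ^ (p-1) * |y m|) := by ring
    have hG0 : 0 ≤ G j m := hGpos j m
    have hJ0 : (0:ℝ) ≤ (J:ℝ) := by linarith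
    have hcross : (J:ℝ) * (|y j| ^ (p-1) * |y m|) ≤ (J:ℝ) * G j m :=
      mul_le_mul_of_nonneg_left (hGB j) hJ0
    have hGB0' := hGB0 j
    calc |1/p * |y j| ^ p + |y j| ^ (p-2) * y j * (t - y j)|
        ≤ 1/p * |y j| ^ p + |y j| ^ (p-1) * |t - y j| := habs
    _ ≤ G j m + (|y j| ^ (p-1) * |h| + (J:ℝ) * (|y j| ^ (p-1) * |y m|)) := by linarith
    _ ≤ G j m + ((1/2) * (|y j| ^ p + |y j| ^ (p-2) * h ^ 2) + (J:ℝ) * G j m) := by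
        linarith
    _ ≤ ((J:ℝ) + 2) * G j m + (1/2) * (|y j| ^ (p-2) * h ^ 2) := by linarith
  -- sum of per-j bounds
  have hAsum : |∑ j ∈ Finset.univ.erase m,
        (1/p * |y j| ^ p + |y j| ^ (p-2) * y j * (t - y j))|
      ≤ ((J:ℝ) + 2) * P + R1 := by
    have h1 := Finset.abs_sum_le_sum_abs
      (fun j => 1/p * |y j| ^ p + |y j| ^ (p-2) * y j * (t - y j))
      (Finset.univ.erase m)
    have h2 : ∑ j ∈ Finset.univ.erase m,
        |1/p * |y j| ^ p + |y j| ^ (p-2) * y j * (t - y j)|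
        ≤ ∑ j ∈ Finset.univ.erase m,
            (((J:ℝ) + 2) * G j m + (1/2) * (|y j| ^ (p-2) * h ^ 2)) :=
      Finset.sum_le_sum hAj
    have h3 : ∑ j ∈ Finset.univ.erase m,
        (((J:ℝ) + 2) * G j m + (1/2) * (|y j| ^ (p-2) * h ^ 2))
        = ((J:ℝ) + 2) * P + (1/2) * ∑ j ∈ Finset.univ.erase m, |y j| ^ (p-2) * h ^ 2 := by
      rw [Finset.sum_add_distrib, hP_def, ← Finset.mul_sum, ← Finset.mul_sum]
    have h4 : ∑ j ∈ Finset.univ.erase m, |y j| ^ (p-2) * h ^ 2 ≤ R1 := by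
      rw [hR1_def]
      exact Finset.sum_le_sum_of_subset_of_nonneg (Finset.erase_subset _ _)
        (fun k _ _ => by positivity)
    have h5 : (0:ℝ) ≤ ∑ j ∈ Finset.univ.erase m, |y j| ^ (p-2) * h ^ 2 :=
      Finset.sum_nonneg fun j _ => by positivity
    linarith
  -- final assembly
  have htotal := abs_sub (1/p * |t| ^ p - 1/p * |y m| ^ p - |y m| ^ (p-2) * y m * b)
    (∑ j ∈ Finset.univ.erase m, (1/p * |y j| ^ p + |y j| ^ (p-2) * y j * (t - y j)))
  have e1 : (200*K + (J:ℝ) + 2) * P ≤ (200*K + (J:ℝ) + 2) * T :=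
    mul_le_mul_of_nonneg_left hPT (by linarith)
  have e2 : (0:ℝ) ≤ (100*K - (J:ℝ)) * T := mul_nonneg (by linarith) hT0
  have e3 : (0:ℝ) ≤ (200*K + 1) * R1 := mul_nonneg (by linarith) hR10
  have e4 : (0:ℝ) ≤ (200*K + 2) * |h| ^ p := mul_nonneg (by linarith) hR20
  linarith [htotal, hDm2, hAsum, e1, e2, e3, e4]
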